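/- arXiv:2307.07796 — 2 statements merged into one kernel-verified Lean document; each statement's English description precedes it below -/
import Mathlib

section
/- Let the diagonal entries {D_{ij} : 1 ≤ i ≤ B, 1 ≤ j ≤ n} of the masks D_1,…,D_B be i.i.d. Bernoulli(p) random variables with p ∈ (0,1). Fix x ∈ Q, let y = Σ_{i=1}^B D_i x_i, and let x̂ be any minimizer of ‖y − Σ_{i=1}^B D_i c_i‖₂² over c ∈ C. Then for every ε > 0, with probability at least 1 − 2^{Br+1} exp(−n ε²/(2B²)) one has (1/(nB))‖x − x̂‖₂² ≤ (1 + Bp/(1−p))·(δ/(nB)) + ρ²ε/(p − p²). -/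
open MeasureTheory Finset

/-- The Bernoulli(p) distribution on ℝ, putting mass `p` on `1` and `1-p` on `0`. -/
noncomputable def bernoulliReal (p : ℝ) : Measure ℝ :=
  ENNReal.ofReal p • Measure.dirac (1 : ℝ) + ENNReal.ofReal (1 - p) • Measure.dirac (0 : ℝ)

section Aux


/-- Key scalar inequality behind Hoeffding's lemma. -/
theorem hoeff_scalar {t : ℝ} (ht0 : 0 ≤ t) (ht1 : t ≤ 1) (h : ℝ) :
    1 - t + t * Real.exp h ≤ Real.exp (t * h + h ^ 2 / 8) := by
  set z : ℝ → ℝ := fun u => 1 - t + t * Real.exp u with hzdef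
  have hzpos : ∀ u, 0 < z u := by
    intro u
    rcases eq_or_lt_of_le ht0 with h0 | h0
    · simp [z, ← h0]
    · have := Real.exp_pos u
      have : 0 < t * Real.exp u := by positivity
      simp only [z]; linarith
  set D : ℝ → ℝ := fun u => t * Real.exp u / z u with hDdef
  set F : ℝ → ℝ := fun u => Real.log (z u) - t * u with hFdef
  have hz : ∀ u, HasDerivAt z (t * Real.exp u) u := by
    intro u
    exact ((Real.hasDerivAt_exp u).const_mul t).const_add (1 - t)
  have hF : ∀ u, HasDerivAt F (D u - t) u := by
    intro u
    exact ((hz u).log (hzpos u).ne').sub ((hasDerivAt_id u).const_mul t |>.congr_deriv (by ring))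
  have hD : ∀ u, HasDerivAt D ((1 - t) * t * Real.exp u / (z u) ^ 2) u := by
    intro u
    have := ((Real.hasDerivAt_exp u).const_mul t).div (hz u) (hzpos u).ne'
    have hzu : z u = 1 - t + t * Real.exp u := rfl
    exact this.congr_deriv (by rw [hzu]; ring)
  have hDble : ∀ u, (1 - t) * t * Real.exp u / (z u) ^ 2 ≤ 1 / 4 := by
    intro u
    have hz2 : 0 < (z u) ^ 2 := pow_pos (hzpos u) 2
    rw [div_le_iff₀ hz2]
    have ha : 0 ≤ 1 - t := by linarith
    have hb : 0 ≤ t * Real.exp u := by positivity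
    have : z u = (1 - t) + t * Real.exp u := rfl
    nlinarith [sq_nonneg ((1 - t) - t * Real.exp u)]
  -- G1 = u/4 - F' u is monotone
  set G1 : ℝ → ℝ := fun u => u / 4 - (D u - t) with hG1def
  have hG1deriv : ∀ u, HasDerivAt G1 (1 / 4 - (1 - t) * t * Real.exp u / (z u) ^ 2) u := by
    intro u
    exact (((hasDerivAt_id u).div_const 4).sub ((hD u).sub_const t))
  have hG1mono : Monotone G1 := by
    apply monotone_of_deriv_nonneg
    · exact fun u => (hG1deriv u).differentiableAt
    · intro u
      rw [(hG1deriv u).deriv]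
      linarith [hDble u]
  have hG10 : G1 0 = 0 := by
    simp [G1, D, z]
  -- G2 = u^2/8 - F u
  set G2 : ℝ → ℝ := fun u => u ^ 2 / 8 - F u with hG2def
  have hG2deriv : ∀ u, HasDerivAt G2 (G1 u) u := by
    intro u
    have : HasDerivAt (fun u : ℝ => u ^ 2 / 8) (u / 4) u := by
      simpa using ((hasDerivAt_pow 2 u).div_const 8).congr_deriv (by ring)
    exact this.sub (hF u)
  have hG2diff : Differentiable ℝ G2 := fun u => (hG2deriv u).differentiableAt
  have key : ∀ u, 0 ≤ G2 u := by
    intro u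
    have hG20 : G2 0 = 0 := by simp [G2, F, z]
    rcases le_or_gt 0 u with hu | hu
    · have mono : MonotoneOn G2 (Set.Ici 0) := by
        apply monotoneOn_of_deriv_nonneg (convex_Ici 0) hG2diff.continuous.continuousOn
          hG2diff.differentiableOn
        intro v hv
        rw [(hG2deriv v).deriv]
        have : (0:ℝ) ≤ v := le_of_lt (by simpa using hv)
        calc (0:ℝ) = G1 0 := hG10.symm
          _ ≤ G1 v := hG1mono this
      calc (0:ℝ) = G2 0 := hG20.symm
        _ ≤ G2 u := mono Set.self_mem_Ici hu hu
    · have anti : AntitoneOn G2 (Set.Iic 0) := by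
        apply antitoneOn_of_deriv_nonpos (convex_Iic 0) hG2diff.continuous.continuousOn
          hG2diff.differentiableOn
        intro v hv
        rw [(hG2deriv v).deriv]
        have : v ≤ 0 := le_of_lt (by simpa using hv)
        calc G1 v ≤ G1 0 := hG1mono this
          _ = 0 := hG10
      calc (0:ℝ) = G2 0 := hG20.symm
        _ ≤ G2 u := anti (le_of_lt hu) Set.self_mem_Iic (le_of_lt hu)
  have hFh : F h ≤ h ^ 2 / 8 := by have := key h; simp only [G2] at this; linarith
  have : Real.log (z h) ≤ t * h + h ^ 2 / 8 := by simp only [F] at hFh; linarith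
  calc 1 - t + t * Real.exp h = z h := rfl
    _ = Real.exp (Real.log (z h)) := (Real.exp_log (hzpos h)).symm
    _ ≤ Real.exp (t * h + h ^ 2 / 8) := Real.exp_le_exp.2 this

/-- Hoeffding mgf bound for a finitely supported distribution on `[0, M]`. -/
theorem hoeff_mgf {Ω : Type*} [Fintype Ω] (w g : Ω → ℝ) (M lam : ℝ)
    (hw0 : ∀ ω, 0 ≤ w ω) (hw1 : ∑ ω, w ω = 1)
    (hg0 : ∀ ω, 0 ≤ g ω) (hgM : ∀ ω, g ω ≤ M) :
    ∑ ω, w ω * Real.exp (lam * g ω) ≤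
      Real.exp (lam * (∑ ω, w ω * g ω) + lam ^ 2 * M ^ 2 / 8) := by
  classical
  rcases isEmpty_or_nonempty Ω with hΩ | hΩ
  · exfalso; rw [Finset.univ_eq_empty, Finset.sum_empty] at hw1; exact zero_ne_one hw1
  set m : ℝ := ∑ ω, w ω * g ω with hm
  have hM0 : 0 ≤ M := le_trans (hg0 (Classical.arbitrary Ω)) (hgM _)
  rcases eq_or_lt_of_le hM0 with hM | hM
  · -- M = 0, so g ≡ 0
    have hg : ∀ ω, g ω = 0 := fun ω => le_antisymm (by rw [hM]; exact hgM ω) (hg0 ω)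
    have hmz : m = 0 := by rw [hm]; simp [hg]
    simp only [hg, mul_zero, Real.exp_zero, mul_one, hw1, ← hM]
    rw [hmz]
    have : (0:ℝ) ≤ lam * 0 + lam ^ 2 * 0 ^ 2 / 8 := by norm_num
    exact Real.one_le_exp this
  -- main case M > 0
  have hm0 : 0 ≤ m := Finset.sum_nonneg fun ω _ => mul_nonneg (hw0 ω) (hg0 ω)
  have hmM : m ≤ M := by
    calc m ≤ ∑ ω, w ω * M := Finset.sum_le_sum fun ω _ => mul_le_mul_of_nonneg_left (hgM ω) (hw0 ω)
      _ = M := by rw [← Finset.sum_mul, hw1, one_mul]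
  set t : ℝ := m / M with htdef
  have ht0 : 0 ≤ t := div_nonneg hm0 hM0
  have ht1 : t ≤ 1 := (div_le_one hM).2 hmM
  -- convexity step: exp(lam * g ω) ≤ 1 - g ω / M + (g ω / M) * exp (lam * M)
  have conv : ∀ ω, Real.exp (lam * g ω) ≤ 1 - g ω / M + g ω / M * Real.exp (lam * M) := by
    intro ω
    have hθ0 : 0 ≤ g ω / M := div_nonneg (hg0 ω) hM0
    have hθ1 : g ω / M ≤ 1 := (div_le_one hM).2 (hgM ω)
    have := convexOn_exp.2 (Set.mem_univ 0) (Set.mem_univ (lam * M))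
      (by linarith : (0:ℝ) ≤ 1 - g ω / M) hθ0 (by ring)
    simp only [smul_eq_mul, mul_zero, zero_add, Real.exp_zero, mul_one] at this
    have harg : g ω / M * (lam * M) = lam * g ω := by field_simp
    rw [harg] at this
    linarith
  calc ∑ ω, w ω * Real.exp (lam * g ω)
      ≤ ∑ ω, w ω * (1 - g ω / M + g ω / M * Real.exp (lam * M)) :=
        Finset.sum_le_sum fun ω _ => mul_le_mul_of_nonneg_left (conv ω) (hw0 ω)
    _ = 1 - t + t * Real.exp (lam * M) := by
        simp only [mul_add, mul_sub, mul_one, mul_div_assoc, Finset.sum_add_distrib,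
          Finset.sum_sub_distrib, hw1]
        have h1 : ∑ x : Ω, w x * (g x / M) = t := by
          rw [htdef, hm, Finset.sum_div]; exact Finset.sum_congr rfl fun x _ => by ring
        have h2 : ∑ x : Ω, w x * (g x / M * Real.exp (lam * M)) = t * Real.exp (lam * M) := by
          rw [← h1, Finset.sum_mul]; exact Finset.sum_congr rfl fun x _ => by ring
        rw [h1, h2]
    _ ≤ Real.exp (t * (lam * M) + (lam * M) ^ 2 / 8) := hoeff_scalar ht0 ht1 _
    _ = Real.exp (lam * m + lam ^ 2 * M ^ 2 / 8) := by
        congr 1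
        rw [htdef]
        field_simp

open Finset in
theorem chernoff_upper {κ : Type*} [Fintype κ] (n : ℕ) (hn : 0 < n)
    (wc : κ → ℝ) (g : Fin n → κ → ℝ) (M s : ℝ)
    (hw0 : ∀ v, 0 ≤ wc v) (hw1 : ∑ v, wc v = 1)
    (hg0 : ∀ j v, 0 ≤ g j v) (hgM : ∀ j v, g j v ≤ M) (hM : 0 < M) (hs : 0 < s) :
    ∑ ω ∈ univ.filter (fun ω : Fin n → κ =>
        (∑ j, ∑ v, wc v * g j v) + s ≤ ∑ j, g j (ω j)), (∏ j, wc (ω j))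
      ≤ Real.exp (-2 * s ^ 2 / (n * M ^ 2)) := by
  classical
  set lam : ℝ := 4 * s / (n * M ^ 2) with hlam
  have hnR : (0:ℝ) < n := Nat.cast_pos.2 hn
  have hlam0 : 0 < lam := by positivity
  set m : ℝ := ∑ j, ∑ v, wc v * g j v with hm
  have hWnn : ∀ ω : Fin n → κ, 0 ≤ ∏ j, wc (ω j) :=
    fun ω => Finset.prod_nonneg fun j _ => hw0 (ω j)
  have step1 : ∑ ω ∈ univ.filter (fun ω : Fin n → κ => m + s ≤ ∑ j, g j (ω j)),
      (∏ j, wc (ω j)) ≤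
      ∑ ω : Fin n → κ, (∏ j, wc (ω j)) * Real.exp (lam * ((∑ j, g j (ω j)) - (m + s))) := by
    calc ∑ ω ∈ univ.filter (fun ω : Fin n → κ => m + s ≤ ∑ j, g j (ω j)), (∏ j, wc (ω j))
        ≤ ∑ ω ∈ univ.filter (fun ω : Fin n → κ => m + s ≤ ∑ j, g j (ω j)),
            (∏ j, wc (ω j)) * Real.exp (lam * ((∑ j, g j (ω j)) - (m + s))) := by
          apply Finset.sum_le_sum
          intro ω hω
          rw [Finset.mem_filter] at hω
          have h1 : (1:ℝ) ≤ Real.exp (lam * ((∑ j, g j (ω j)) - (m + s))) :=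
            Real.one_le_exp (by nlinarith [hω.2])
          nlinarith [hWnn ω]
      _ ≤ ∑ ω : Fin n → κ, (∏ j, wc (ω j)) * Real.exp (lam * ((∑ j, g j (ω j)) - (m + s))) := by
          apply Finset.sum_le_sum_of_subset_of_nonneg (Finset.filter_subset _ _)
          intro ω _ _
          exact mul_nonneg (hWnn ω) (Real.exp_pos _).le
  have step2 : ∑ ω : Fin n → κ, (∏ j, wc (ω j)) * Real.exp (lam * (∑ j, g j (ω j))) =
      ∏ j, ∑ v, wc v * Real.exp (lam * g j v) := by
    rw [Finset.prod_univ_sum]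
    rw [Fintype.piFinset_univ]
    apply Finset.sum_congr rfl
    intro ω _
    rw [Finset.prod_mul_distrib, ← Real.exp_sum, Finset.mul_sum]
  have step3 : ∏ j, ∑ v, wc v * Real.exp (lam * g j v) ≤
      Real.exp (lam * m + n * (lam ^ 2 * M ^ 2 / 8)) := by
    have := Finset.prod_le_prod (s := univ) (f := fun j : Fin n => ∑ v, wc v * Real.exp (lam * g j v))
      (g := fun j : Fin n => Real.exp (lam * (∑ v, wc v * g j v) + lam ^ 2 * M ^ 2 / 8))
      (fun j _ => Finset.sum_nonneg fun v _ => mul_nonneg (hw0 v) (Real.exp_pos _).le)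
      (fun j _ => hoeff_mgf wc (g j) M lam hw0 hw1 (hg0 j) (hgM j))
    refine this.trans_eq ?_
    rw [← Real.exp_sum]
    congr 1
    rw [Finset.sum_add_distrib, ← Finset.mul_sum, Finset.sum_const, Finset.card_univ,
      Fintype.card_fin, nsmul_eq_mul]
  calc ∑ ω ∈ univ.filter (fun ω : Fin n → κ => m + s ≤ ∑ j, g j (ω j)), (∏ j, wc (ω j))
      ≤ ∑ ω : Fin n → κ, (∏ j, wc (ω j)) * Real.exp (lam * ((∑ j, g j (ω j)) - (m + s))) := step1
    _ = Real.exp (-(lam * (m + s))) * ∑ ω : Fin n → κ,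
          (∏ j, wc (ω j)) * Real.exp (lam * (∑ j, g j (ω j))) := by
        rw [Finset.mul_sum]
        apply Finset.sum_congr rfl
        intro ω _
        have : Real.exp (lam * ((∑ j, g j (ω j)) - (m + s))) =
            Real.exp (-(lam * (m + s))) * Real.exp (lam * (∑ j, g j (ω j))) := by
          rw [← Real.exp_add]; ring_nf
        rw [this]; ring
    _ ≤ Real.exp (-(lam * (m + s))) * Real.exp (lam * m + n * (lam ^ 2 * M ^ 2 / 8)) := by
        apply mul_le_mul_of_nonneg_left (step2 ▸ step3) (Real.exp_pos _).le
    _ = Real.exp (-(lam * (m + s)) + (lam * m + n * (lam ^ 2 * M ^ 2 / 8))) := by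
        rw [← Real.exp_add]
    _ = Real.exp (-2 * s ^ 2 / (n * M ^ 2)) := by
        congr 1
        rw [hlam]
        field_simp
        ring

open Finset in
theorem chernoff_lower {κ : Type*} [Fintype κ] (n : ℕ) (hn : 0 < n)
    (wc : κ → ℝ) (g : Fin n → κ → ℝ) (M s : ℝ)
    (hw0 : ∀ v, 0 ≤ wc v) (hw1 : ∑ v, wc v = 1)
    (hg0 : ∀ j v, 0 ≤ g j v) (hgM : ∀ j v, g j v ≤ M) (hM : 0 < M) (hs : 0 < s) :
    ∑ ω ∈ univ.filter (fun ω : Fin n → κ =>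
        ∑ j, g j (ω j) ≤ (∑ j, ∑ v, wc v * g j v) - s), (∏ j, wc (ω j))
      ≤ Real.exp (-2 * s ^ 2 / (n * M ^ 2)) := by
  classical
  have key := chernoff_upper n hn wc (fun j v => M - g j v) M s hw0 hw1
    (fun j v => sub_nonneg.2 (hgM j v)) (fun j v => by simpa using hg0 j v) hM hs
  refine le_trans (le_of_eq ?_) key
  apply Finset.sum_congr _ (fun _ _ => rfl)
  apply Finset.filter_congr
  intro ω _
  have hcol : ∀ j : Fin n, ∑ v, wc v * (M - g j v) = M - ∑ v, wc v * g j v := by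
    intro j
    simp only [mul_sub]
    rw [Finset.sum_sub_distrib, ← Finset.sum_mul, hw1, one_mul]
  simp only [hcol, Finset.sum_sub_distrib, Finset.sum_const, Finset.card_univ,
    Fintype.card_fin, nsmul_eq_mul]
  constructor <;> intro h <;> linarith

instance bernoulliReal.isFiniteMeasure (p : ℝ) : IsFiniteMeasure (bernoulliReal p) := by
  constructor
  rw [bernoulliReal]
  simp [Measure.add_apply]

theorem bernoulliReal_one (p : ℝ) : bernoulliReal p {(1:ℝ)} = ENNReal.ofReal p := by
  rw [bernoulliReal]
  simp [Measure.dirac_apply]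

theorem bernoulliReal_zero (p : ℝ) : bernoulliReal p {(0:ℝ)} = ENNReal.ofReal (1 - p) := by
  rw [bernoulliReal]
  simp [Measure.dirac_apply]

theorem measure_ge_good {n B : ℕ} (p : ℝ) (hp0 : 0 ≤ p) (hp1 : p ≤ 1)
    (S : Set (Fin B → Fin n → ℝ)) (G : Finset (Fin n → Fin B → Bool))
    (hG : ∀ ω ∈ G, (fun i j => if ω j i then (1:ℝ) else 0) ∈ S) :
    ENNReal.ofReal (∑ ω ∈ G, ∏ j, ∏ i, (if ω j i then p else 1 - p)) ≤
      (Measure.pi fun _ : Fin B => Measure.pi fun _ : Fin n => bernoulliReal p) S := by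
  classical
  set μ := (Measure.pi fun _ : Fin B => Measure.pi fun _ : Fin n => bernoulliReal p) with hμ
  set toD : (Fin n → Fin B → Bool) → (Fin B → Fin n → ℝ) :=
    fun ω i j => if ω j i then (1:ℝ) else 0 with htoD
  have hsingle : ∀ ω : Fin n → Fin B → Bool,
      μ {toD ω} = ENNReal.ofReal (∏ j, ∏ i, (if ω j i then p else 1 - p)) := by
    intro ω
    have h1 : ({toD ω} : Set (Fin B → Fin n → ℝ)) = Set.pi Set.univ (fun i => {toD ω i}) := by
      rw [Set.univ_pi_singleton]
    have h2 : ∀ i : Fin B, ({toD ω i} : Set (Fin n → ℝ)) = Set.pi Set.univ (fun j => {toD ω i j}) := by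
      intro i; rw [Set.univ_pi_singleton]
    rw [h1, Measure.pi_pi]
    have h3 : ∀ i : Fin B, (Measure.pi fun _ : Fin n => bernoulliReal p) {toD ω i} =
        ENNReal.ofReal (∏ j, (if ω j i then p else 1 - p)) := by
      intro i
      rw [h2 i, Measure.pi_pi]
      have h4 : ∀ j : Fin n, bernoulliReal p {toD ω i j} =
          ENNReal.ofReal (if ω j i then p else 1 - p) := by
        intro j
        by_cases h : ω j i
        · simp only [htoD, h, if_true]
          exact bernoulliReal_one p
        · simp only [htoD, h, if_false]
          exact bernoulliReal_zero p
      rw [Finset.prod_congr rfl fun j _ => h4 j]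
      rw [← ENNReal.ofReal_prod_of_nonneg]
      intro j _
      by_cases h : ω j i <;> simp [h] <;> linarith
    rw [Finset.prod_congr rfl fun i _ => h3 i, ← ENNReal.ofReal_prod_of_nonneg]
    · rw [Finset.prod_comm]
    · intro i _
      exact Finset.prod_nonneg fun j _ => by by_cases h : ω j i <;> simp [h] <;> linarith
  have hinj : Function.Injective toD := by
    intro ω ω' h
    funext j i
    have := congrFun (congrFun h i) j
    simp only [htoD] at this
    by_cases h1 : ω j i <;> by_cases h2 : ω' j i <;> simp [h1, h2] at this ⊢ <;> norm_num at this
  have hterm : ∀ ω ∈ G, (0:ℝ) ≤ ∏ j, ∏ i, (if ω j i then p else 1 - p) := by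
    intro ω _
    exact Finset.prod_nonneg fun j _ => Finset.prod_nonneg fun i _ =>
      (by by_cases h : ω j i <;> simp [h] <;> linarith)
  rw [ENNReal.ofReal_sum_of_nonneg hterm]
  have hsum : ∑ ω ∈ G, ENNReal.ofReal (∏ j, ∏ i, (if ω j i then p else 1 - p)) =
      μ (⋃ ω ∈ G, {toD ω}) := by
    rw [measure_biUnion_finset]
    · exact Finset.sum_congr rfl fun ω _ => (hsingle ω).symm
    · intro ω hω ω' hω' hne
      simp only [Function.onFun, Set.disjoint_singleton]
      exact fun h => hne (hinj h)
    · intro ω _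
      exact MeasurableSet.singleton _
  rw [hsum]
  apply measure_mono
  intro d hd
  simp only [Set.mem_iUnion] at hd
  obtain ⟨ω, hω, hd⟩ := hd
  rw [Set.mem_singleton_iff] at hd
  rw [hd]
  exact hG ω hω

theorem pairmoment (B : ℕ) (p : ℝ) (i k : Fin B) :
    ∑ v : Fin B → Bool, (∏ l, (if v l then p else 1 - p)) *
      (if v i then (1:ℝ) else 0) * (if v k then (1:ℝ) else 0) =
      if i = k then p else p ^ 2 := by
  classical
  set φ : Fin B → Bool → ℝ := fun l u => (if u then p else 1 - p) *
      (if l = i then (if u then (1:ℝ) else 0) else 1) *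
      (if l = k then (if u then (1:ℝ) else 0) else 1) with hφ
  have hrw : ∀ v : Fin B → Bool, (∏ l, (if v l then p else 1 - p)) *
      (if v i then (1:ℝ) else 0) * (if v k then (1:ℝ) else 0) =
      ∏ l, φ l (v l) := by
    intro v
    simp only [hφ]
    rw [Finset.prod_mul_distrib, Finset.prod_mul_distrib]
    congr 1
    · congr 1
      simp [Finset.prod_ite_eq']
    · simp [Finset.prod_ite_eq']
  rw [Finset.sum_congr rfl fun v _ => hrw v]
  have hfact : ∑ v : Fin B → Bool, ∏ l, φ l (v l) = ∏ l, ∑ u : Bool, φ l u := by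
    rw [Finset.prod_univ_sum, Fintype.piFinset_univ]
  rw [hfact]
  have hcol : ∀ l : Fin B, (∑ u : Bool, φ l u) = if l = i ∨ l = k then p else 1 := by
    intro l
    simp only [hφ]
    rw [Fintype.sum_bool]
    by_cases h1 : l = i <;> by_cases h2 : l = k <;> simp [h1, h2] <;> ring
  rw [Finset.prod_congr rfl fun l _ => hcol l]
  rcases eq_or_ne i k with h | h
  · subst h
    simp only [or_self]
    simp [Finset.prod_ite_eq']
  · have hsplit : ∀ l : Fin B, (if l = i ∨ l = k then p else 1) =
        (if l = i then p else 1) * (if l = k then p else 1) := by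
      intro l
      by_cases h1 : l = i <;> by_cases h2 : l = k
      · exact absurd (h1 ▸ h2 ▸ rfl : i = k) h
      · simp [h1, h2, h]
      · simp [h1, h2, Ne.symm h]
      · simp [h1, h2]
    rw [Finset.prod_congr rfl fun l _ => hsplit l, Finset.prod_mul_distrib]
    simp [Finset.prod_ite_eq', h, sq]

theorem colmean (B : ℕ) (p : ℝ) (e : Fin B → ℝ) :
    ∑ v : Fin B → Bool, (∏ l, (if v l then p else 1 - p)) *
        (∑ i, (if v i then (1:ℝ) else 0) * e i) ^ 2
      = (p - p ^ 2) * (∑ i, (e i) ^ 2) + p ^ 2 * (∑ i, e i) ^ 2 := by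
  classical
  have hexp : ∀ v : Fin B → Bool, (∏ l, (if v l then p else 1 - p)) *
      (∑ i, (if v i then (1:ℝ) else 0) * e i) ^ 2 =
      ∑ i, ∑ k, ((∏ l, (if v l then p else 1 - p)) *
        (if v i then (1:ℝ) else 0) * (if v k then (1:ℝ) else 0)) * (e i * e k) := by
    intro v
    rw [sq, Finset.sum_mul_sum, Finset.mul_sum]
    apply Finset.sum_congr rfl
    intro i _
    rw [Finset.mul_sum]
    apply Finset.sum_congr rfl
    intro k _
    ring
  rw [Finset.sum_congr rfl fun v _ => hexp v]
  rw [Finset.sum_comm]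
  have hswap : ∀ i : Fin B, ∑ v : Fin B → Bool, ∑ k, ((∏ l, (if v l then p else 1 - p)) *
      (if v i then (1:ℝ) else 0) * (if v k then (1:ℝ) else 0)) * (e i * e k) =
      ∑ k, (if i = k then p else p ^ 2) * (e i * e k) := by
    intro i
    rw [Finset.sum_comm]
    apply Finset.sum_congr rfl
    intro k _
    rw [← Finset.sum_mul, pairmoment]
  rw [Finset.sum_congr rfl fun i _ => hswap i]
  have hsplit : ∀ i : Fin B, ∑ k, (if i = k then p else p ^ 2) * (e i * e k) =
      (p - p ^ 2) * (e i) ^ 2 + p ^ 2 * (e i * ∑ k, e k) := by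
    intro i
    have : ∀ k : Fin B, (if i = k then p else p ^ 2) * (e i * e k) =
        (if k = i then (p - p ^ 2) * (e i * e k) else 0) + p ^ 2 * (e i * e k) := by
      intro k
      by_cases h : i = k
      · subst h; simp; ring
      · simp [h, Ne.symm h]
    rw [Finset.sum_congr rfl fun k _ => this k, Finset.sum_add_distrib,
      Finset.sum_ite_eq' Finset.univ i (fun k => (p - p ^ 2) * (e i * e k))]
    simp only [Finset.mem_univ, if_true, ← Finset.mul_sum]
    ring
  rw [Finset.sum_congr rfl fun i _ => hsplit i, Finset.sum_add_distrib]
  congr 1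
  · rw [Finset.mul_sum]
  · rw [← Finset.mul_sum]
    congr 1
    rw [sq, ← Finset.sum_mul]

end Aux

set_option maxHeartbeats 2000000 in
/-- CSP recovery guarantee for i.i.d. Bernoulli(p) binary masks. -/
theorem csp_iid_bernoulli_masks
    (n B : ℕ) (hn : 1 ≤ n) (hB : 1 ≤ B)
    (ρ δ r p ε : ℝ) (hρ : 0 < ρ) (hδ : 0 ≤ δ) (hr : 0 < r)
    (hp : p ∈ Set.Ioo (0 : ℝ) 1) (hε : 0 < ε)
    -- the signal class with ℓ∞ bound ρ/2
    (Q : Set (Fin B → Fin n → ℝ))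
    (hQ : ∀ x ∈ Q, ∀ i j, |x i j| ≤ ρ / 2)
    -- the codebook of a rate-r distortion-δ compression code
    (C : Finset (Fin B → Fin n → ℝ))
    (hCcard : (C.card : ℝ) ≤ 2 ^ ((B : ℝ) * r))
    (hCbound : ∀ c ∈ C, ∀ i j, |c i j| ≤ ρ / 2)
    (enc : (Fin B → Fin n → ℝ) → (Fin B → Fin n → ℝ))
    (henc : ∀ x ∈ Q, enc x ∈ C ∧ ∑ i, ∑ j, (x i j - enc x i j) ^ 2 ≤ δ)
    -- the fixed signal
    (x : Fin B → Fin n → ℝ) (hx : x ∈ Q)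
    -- the CSP estimator: for each mask realization D, xhat D minimizes
    -- ‖y - ∑ᵢ Dᵢ cᵢ‖₂² over c ∈ C, where y = ∑ᵢ Dᵢ xᵢ
    (xhat : (Fin B → Fin n → ℝ) → (Fin B → Fin n → ℝ))
    (hxhat : ∀ D : Fin B → Fin n → ℝ, xhat D ∈ C ∧ ∀ c ∈ C,
      ∑ j, ((∑ i, D i j * x i j) - ∑ i, D i j * xhat D i j) ^ 2 ≤
        ∑ j, ((∑ i, D i j * x i j) - ∑ i, D i j * c i j) ^ 2) :
    (Measure.pi fun _ : Fin B => Measure.pi fun _ : Fin n => bernoulliReal p)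
      {D : Fin B → Fin n → ℝ |
        (1 / (n * B : ℝ)) * ∑ i, ∑ j, (x i j - xhat D i j) ^ 2 ≤
          (1 + B * p / (1 - p)) * (δ / (n * B)) + ρ ^ 2 * ε / (p - p ^ 2)} ≥
      ENNReal.ofReal
        (1 - 2 ^ ((B : ℝ) * r + 1) * Real.exp (-(n * ε ^ 2) / (2 * B ^ 2))) := by
  classical
  obtain ⟨hp0, hp1⟩ := hp
  have hq : 0 < p - p ^ 2 := by nlinarith
  have h1p : 0 < 1 - p := by linarith
  have hnR : (0:ℝ) < n := by exact_mod_cast Nat.lt_of_lt_of_le Nat.zero_lt_one hn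
  have hBR : (0:ℝ) < B := by exact_mod_cast Nat.lt_of_lt_of_le Nat.zero_lt_one hB
  obtain ⟨hxtC, hxtδ⟩ := henc x hx
  set xt := enc x with hxtdef
  -- weights and statistics
  set wc : (Fin B → Bool) → ℝ := fun v => ∏ i, (if v i then p else 1 - p) with hwc
  set gc : (Fin B → Fin n → ℝ) → Fin n → (Fin B → Bool) → ℝ :=
    fun c j v => (∑ i, (if v i then (1:ℝ) else 0) * (x i j - c i j)) ^ 2 with hgc
  set fE : (Fin B → Fin n → ℝ) → (Fin n → Fin B → Bool) → ℝ :=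
    fun c ω => ∑ j, gc c j (ω j) with hfE
  set mE : (Fin B → Fin n → ℝ) → ℝ := fun c => ∑ j, ∑ v, wc v * gc c j v with hmE
  set s : ℝ := (n : ℝ) * (ρ ^ 2 * B * ε / 2) with hs
  set M : ℝ := ((B : ℝ) * ρ) ^ 2 with hM
  set W : (Fin n → Fin B → Bool) → ℝ := fun ω => ∏ j, ∏ i, (if ω j i then p else 1 - p)
    with hW
  set E : ℝ := Real.exp (-(n * ε ^ 2) / (2 * B ^ 2)) with hE
  have hspos : 0 < s := by positivity
  have hMpos : 0 < M := by positivity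
  have hEpos : 0 < E := Real.exp_pos _
  have hw0 : ∀ v, 0 ≤ wc v := fun v => Finset.prod_nonneg fun i _ => by
    by_cases h : v i <;> simp [h] <;> linarith
  have hw1 : ∑ v, wc v = 1 := by
    have h := Finset.prod_univ_sum (fun _ : Fin B => (univ : Finset Bool))
      (fun _ u => if u then p else 1 - p)
    simp only [Fintype.piFinset_univ] at h
    simp only [hwc]
    rw [← h]
    simp
  have hW0 : ∀ ω, 0 ≤ W ω := fun ω => Finset.prod_nonneg fun j _ =>
    Finset.prod_nonneg fun i _ => by by_cases h : ω j i <;> simp [h] <;> linarith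
  have hWprod : ∀ ω : Fin n → Fin B → Bool, W ω = ∏ j, wc (ω j) := fun ω => rfl
  have hWtot : ∑ ω : Fin n → Fin B → Bool, W ω = 1 := by
    have h := Finset.prod_univ_sum (fun _ : Fin n => (univ : Finset (Fin B → Bool)))
      (fun _ v => wc v)
    simp only [Fintype.piFinset_univ] at h
    rw [Finset.sum_congr rfl fun ω _ => hWprod ω, ← h]
    rw [Finset.prod_congr rfl fun j _ => hw1]
    simp
  -- bounds on gc for codewords
  have hg0 : ∀ c j v, 0 ≤ gc c j v := fun c j v => sq_nonneg _
  have herr : ∀ c ∈ C, ∀ i j, |x i j - c i j| ≤ ρ := by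
    intro c hc i j
    calc |x i j - c i j| ≤ |x i j| + |c i j| := abs_sub _ _
      _ ≤ ρ / 2 + ρ / 2 := add_le_add (hQ x hx i j) (hCbound c hc i j)
      _ = ρ := by ring
  have hgM : ∀ c ∈ C, ∀ j v, gc c j v ≤ M := by
    intro c hc j v
    simp only [hgc, hM]
    have habs : |∑ i, (if v i then (1:ℝ) else 0) * (x i j - c i j)| ≤ (B:ℝ) * ρ := by
      calc |∑ i, (if v i then (1:ℝ) else 0) * (x i j - c i j)|
          ≤ ∑ i, |(if v i then (1:ℝ) else 0) * (x i j - c i j)| :=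
            Finset.abs_sum_le_sum_abs _ _
        _ ≤ ∑ i : Fin B, ρ := by
            apply Finset.sum_le_sum
            intro i _
            rw [abs_mul]
            calc |if v i then (1:ℝ) else 0| * |x i j - c i j|
                ≤ 1 * ρ := by
                  apply mul_le_mul _ (herr c hc i j) (abs_nonneg _) zero_le_one
                  by_cases h : v i <;> simp [h]
              _ = ρ := one_mul ρ
        _ = (B:ℝ) * ρ := by simp [mul_comm]
    have := abs_le.1 habs
    nlinarith [this.1, this.2]
  -- the exponent identity
  have hexp_eq : Real.exp (-2 * s ^ 2 / ((n:ℝ) * M ^ 2)) = E := by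
    rw [hE, hs, hM]
    congr 1
    field_simp
  -- exact mean formula
  have hmean : ∀ c : Fin B → Fin n → ℝ, mE c =
      ∑ j, ((p - p ^ 2) * (∑ i, (x i j - c i j) ^ 2) + p ^ 2 * (∑ i, (x i j - c i j)) ^ 2) := by
    intro c
    simp only [hmE, hwc, hgc]
    apply Finset.sum_congr rfl
    intro j _
    exact colmean B p (fun i => x i j - c i j)
  have hmean_lb : ∀ c : Fin B → Fin n → ℝ,
      (p - p ^ 2) * (∑ j, ∑ i, (x i j - c i j) ^ 2) ≤ mE c := by
    intro c
    rw [hmean c, Finset.mul_sum]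
    apply Finset.sum_le_sum
    intro j _
    nlinarith [sq_nonneg (∑ i, (x i j - c i j))]
  have hmean_ub : mE xt ≤ (p - p ^ 2) * δ + p ^ 2 * B * δ := by
    have hsq : ∀ j : Fin n, (∑ i, (x i j - xt i j)) ^ 2 ≤ (B:ℝ) * ∑ i, (x i j - xt i j) ^ 2 := by
      intro j
      have := sq_sum_le_card_mul_sum_sq (s := Finset.univ) (f := fun i => x i j - xt i j)
      simpa using this
    have hsum : ∑ j, ∑ i, (x i j - xt i j) ^ 2 ≤ δ := by
      rw [Finset.sum_comm]
      exact hxtδ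
    have hsumnn : 0 ≤ ∑ j, ∑ i, (x i j - xt i j) ^ 2 :=
      Finset.sum_nonneg fun j _ => Finset.sum_nonneg fun i _ => sq_nonneg _
    calc mE xt = ∑ j, ((p - p ^ 2) * (∑ i, (x i j - xt i j) ^ 2)
          + p ^ 2 * (∑ i, (x i j - xt i j)) ^ 2) := hmean xt
      _ ≤ ∑ j, ((p - p ^ 2) * (∑ i, (x i j - xt i j) ^ 2)
          + p ^ 2 * ((B:ℝ) * ∑ i, (x i j - xt i j) ^ 2)) := by
          apply Finset.sum_le_sum
          intro j _
          exact add_le_add_right (mul_le_mul_of_nonneg_left (hsq j) (sq_nonneg p)) _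
      _ = ((p - p ^ 2) + p ^ 2 * B) * ∑ j, ∑ i, (x i j - xt i j) ^ 2 := by
          rw [Finset.mul_sum]
          apply Finset.sum_congr rfl
          intro j _
          ring
      _ ≤ ((p - p ^ 2) + p ^ 2 * B) * δ := by
          apply mul_le_mul_of_nonneg_left hsum
          have h1 : (0:ℝ) ≤ p ^ 2 * B := by positivity
          linarith
      _ = (p - p ^ 2) * δ + p ^ 2 * B * δ := by ring
  -- the good event
  set G : Finset (Fin n → Fin B → Bool) := univ.filter (fun ω =>
    (∀ c ∈ C, mE c - s ≤ fE c ω) ∧ fE xt ω ≤ mE xt + s) with hG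
  -- tail bounds
  have htail_low : ∀ c ∈ C,
      ∑ ω ∈ univ.filter (fun ω : Fin n → Fin B → Bool => fE c ω ≤ mE c - s), W ω ≤ E := by
    intro c hc
    have := chernoff_lower (κ := Fin B → Bool) n (Nat.lt_of_lt_of_le Nat.zero_lt_one hn)
      wc (gc c) M s hw0 hw1 (fun j v => hg0 c j v) (fun j v => hgM c hc j v) hMpos hspos
    rw [hexp_eq] at this
    refine le_trans (le_of_eq ?_) this
    apply Finset.sum_congr rfl fun ω _ => hWprod ω
  have htail_up :
      ∑ ω ∈ univ.filter (fun ω : Fin n → Fin B → Bool => mE xt + s ≤ fE xt ω), W ω ≤ E := by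
    have := chernoff_upper (κ := Fin B → Bool) n (Nat.lt_of_lt_of_le Nat.zero_lt_one hn)
      wc (gc xt) M s hw0 hw1 (fun j v => hg0 xt j v) (fun j v => hgM xt hxtC j v) hMpos hspos
    rw [hexp_eq] at this
    refine le_trans (le_of_eq ?_) this
    apply Finset.sum_congr ?_ fun ω _ => hWprod ω
    apply Finset.filter_congr
    intro ω _
    constructor <;> intro h <;> linarith
  -- union bound
  have hbad : ∑ ω ∈ univ.filter (fun ω : Fin n → Fin B → Bool =>
      ¬((∀ c ∈ C, mE c - s ≤ fE c ω) ∧ fE xt ω ≤ mE xt + s)), W ω ≤ ((C.card : ℝ) + 1) * E := by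
    set ind₁ : (Fin B → Fin n → ℝ) → (Fin n → Fin B → Bool) → ℝ :=
      fun c ω => if fE c ω ≤ mE c - s then (1:ℝ) else 0 with hind₁
    set ind₂ : (Fin n → Fin B → Bool) → ℝ :=
      fun ω => if mE xt + s ≤ fE xt ω then (1:ℝ) else 0 with hind₂
    have hindnn : ∀ c ω, 0 ≤ ind₁ c ω := fun c ω => by
      simp only [hind₁]; by_cases h : fE c ω ≤ mE c - s <;> simp [h]
    have hind₂nn : ∀ ω, 0 ≤ ind₂ ω := fun ω => by
      simp only [hind₂]; by_cases h : mE xt + s ≤ fE xt ω <;> simp [h]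
    have hone : ∀ ω ∈ univ.filter (fun ω : Fin n → Fin B → Bool =>
        ¬((∀ c ∈ C, mE c - s ≤ fE c ω) ∧ fE xt ω ≤ mE xt + s)),
        1 ≤ (∑ c ∈ C, ind₁ c ω) + ind₂ ω := by
      intro ω hω
      rw [Finset.mem_filter] at hω
      by_cases hA : ∀ c ∈ C, mE c - s ≤ fE c ω
      · have hB2 : ¬(fE xt ω ≤ mE xt + s) := fun h => hω.2 ⟨hA, h⟩
        push_neg at hB2
        have : ind₂ ω = 1 := by simp only [hind₂]; rw [if_pos hB2.le]
        have hsum : 0 ≤ ∑ c ∈ C, ind₁ c ω := Finset.sum_nonneg fun c _ => hindnn c ω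
        linarith
      · push_neg at hA
        obtain ⟨c, hc, hclt⟩ := hA
        have h1 : ind₁ c ω = 1 := by simp only [hind₁]; rw [if_pos hclt.le]
        have : (1:ℝ) ≤ ∑ c ∈ C, ind₁ c ω := by
          rw [← h1]
          exact Finset.single_le_sum (fun c _ => hindnn c ω) hc
        linarith [hind₂nn ω]
    calc ∑ ω ∈ univ.filter (fun ω : Fin n → Fin B → Bool =>
          ¬((∀ c ∈ C, mE c - s ≤ fE c ω) ∧ fE xt ω ≤ mE xt + s)), W ω
        ≤ ∑ ω ∈ univ.filter (fun ω : Fin n → Fin B → Bool =>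
          ¬((∀ c ∈ C, mE c - s ≤ fE c ω) ∧ fE xt ω ≤ mE xt + s)),
            W ω * ((∑ c ∈ C, ind₁ c ω) + ind₂ ω) := by
          apply Finset.sum_le_sum
          intro ω hω
          nlinarith [hW0 ω, hone ω hω]
      _ ≤ ∑ ω : Fin n → Fin B → Bool, W ω * ((∑ c ∈ C, ind₁ c ω) + ind₂ ω) := by
          apply Finset.sum_le_sum_of_subset_of_nonneg (Finset.filter_subset _ _)
          intro ω _ _
          have : 0 ≤ (∑ c ∈ C, ind₁ c ω) + ind₂ ω :=
            add_nonneg (Finset.sum_nonneg fun c _ => hindnn c ω) (hind₂nn ω)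
          exact mul_nonneg (hW0 ω) this
      _ = (∑ c ∈ C, ∑ ω : Fin n → Fin B → Bool, W ω * ind₁ c ω)
          + ∑ ω : Fin n → Fin B → Bool, W ω * ind₂ ω := by
          have h1 : ∀ ω, W ω * ((∑ c ∈ C, ind₁ c ω) + ind₂ ω)
              = (∑ c ∈ C, W ω * ind₁ c ω) + W ω * ind₂ ω := by
            intro ω; rw [mul_add, Finset.mul_sum]
          rw [Finset.sum_congr rfl fun ω _ => h1 ω, Finset.sum_add_distrib,
            Finset.sum_comm]
      _ ≤ (∑ c ∈ C, E) + E := by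
          apply add_le_add
          · apply Finset.sum_le_sum
            intro c hc
            have : ∑ ω : Fin n → Fin B → Bool, W ω * ind₁ c ω =
                ∑ ω ∈ univ.filter (fun ω : Fin n → Fin B → Bool =>
                  fE c ω ≤ mE c - s), W ω := by
              rw [Finset.sum_filter]
              apply Finset.sum_congr rfl
              intro ω _
              simp only [hind₁]
              by_cases h : fE c ω ≤ mE c - s <;> simp [h]
            rw [this]
            exact htail_low c hc
          · have : ∑ ω : Fin n → Fin B → Bool, W ω * ind₂ ω =
                ∑ ω ∈ univ.filter (fun ω : Fin n → Fin B → Bool =>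
                  mE xt + s ≤ fE xt ω), W ω := by
              rw [Finset.sum_filter]
              apply Finset.sum_congr rfl
              intro ω _
              simp only [hind₂]
              by_cases h : mE xt + s ≤ fE xt ω <;> simp [h]
            rw [this]
            exact htail_up
      _ = ((C.card : ℝ) + 1) * E := by
          rw [Finset.sum_const, nsmul_eq_mul]
          ring
  have hgood : 1 - ((C.card : ℝ) + 1) * E ≤ ∑ ω ∈ G, W ω := by
    have hpart := Finset.sum_filter_add_sum_filter_not Finset.univ
      (fun ω : Fin n → Fin B → Bool =>
        (∀ c ∈ C, mE c - s ≤ fE c ω) ∧ fE xt ω ≤ mE xt + s) W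
    rw [hWtot] at hpart
    rw [hG]
    linarith
  -- deterministic implication
  have hdet : ∀ ω ∈ G, (fun i j => if ω j i then (1:ℝ) else 0) ∈
      {D : Fin B → Fin n → ℝ |
        (1 / (n * B : ℝ)) * ∑ i, ∑ j, (x i j - xhat D i j) ^ 2 ≤
          (1 + B * p / (1 - p)) * (δ / (n * B)) + ρ ^ 2 * ε / (p - p ^ 2)} := by
    intro ω hω
    rw [hG, Finset.mem_filter] at hω
    obtain ⟨-, hωlow, hωup⟩ := hω
    set D : Fin B → Fin n → ℝ := fun i j => if ω j i then (1:ℝ) else 0 with hD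
    obtain ⟨hchatC, hmin⟩ := hxhat D
    set chat := xhat D with hchat
    -- identify the objective with fE
    have hobj : ∀ c : Fin B → Fin n → ℝ,
        ∑ j, ((∑ i, D i j * x i j) - ∑ i, D i j * c i j) ^ 2 = fE c ω := by
      intro c
      simp only [hfE, hgc]
      apply Finset.sum_congr rfl
      intro j _
      congr 1
      rw [← Finset.sum_sub_distrib]
      apply Finset.sum_congr rfl
      intro i _
      simp only [hD]
      ring
    have hmin' : fE chat ω ≤ fE xt ω := by
      rw [← hobj chat, ← hobj xt]
      exact hmin xt hxtC
    have hchain : (p - p ^ 2) * (∑ j, ∑ i, (x i j - chat i j) ^ 2) ≤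
        (p - p ^ 2) * δ + p ^ 2 * B * δ + 2 * s := by
      have h1 := hmean_lb chat
      have h2 := hωlow chat hchatC
      have h3 := hωup
      linarith [hmean_ub]
    -- final arithmetic
    rw [Set.mem_setOf_eq]
    have hTcomm : ∑ i, ∑ j, (x i j - chat i j) ^ 2 = ∑ j, ∑ i, (x i j - chat i j) ^ 2 :=
      Finset.sum_comm
    have hnB : (0:ℝ) < (n:ℝ) * B := by positivity
    have hqnB : (0:ℝ) < (p - p ^ 2) * ((n:ℝ) * B) := by positivity
    have h1 : (1 + (B:ℝ) * p / (1 - p)) * (δ / ((n:ℝ) * B)) =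
        ((p - p ^ 2) * δ + p ^ 2 * B * δ) / ((p - p ^ 2) * ((n:ℝ) * B)) := by
      rw [eq_div_iff hqnB.ne']
      field_simp
    have h2 : ρ ^ 2 * ε / (p - p ^ 2) = 2 * s / ((p - p ^ 2) * ((n:ℝ) * B)) := by
      rw [hs, eq_div_iff hqnB.ne']
      field_simp
    rw [h1, h2, ← add_div, one_div, inv_mul_eq_div, hTcomm,
      div_le_div_iff₀ hnB hqnB]
    nlinarith [hchain, hnB.le]
  -- put it together
  have hmeas := measure_ge_good p hp0.le hp1.le _ G hdet
  refine le_trans ?_ hmeas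
  apply ENNReal.ofReal_le_ofReal
  have hcard : ((C.card : ℝ) + 1) * E ≤ 2 ^ ((B:ℝ) * r + 1) * E := by
    apply mul_le_mul_of_nonneg_right _ hEpos.le
    have h2 : (1:ℝ) ≤ 2 ^ ((B:ℝ) * r) := by
      rw [show (1:ℝ) = 2 ^ (0:ℝ) by rw [Real.rpow_zero]]
      apply Real.rpow_le_rpow_of_exponent_le (by norm_num)
      positivity
    have : (2:ℝ) ^ ((B:ℝ) * r + 1) = 2 ^ ((B:ℝ) * r) * 2 := by
      rw [Real.rpow_add (by norm_num : (0:ℝ) < 2), Real.rpow_one]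
    rw [this]
    linarith [hCcard]
  have hsum_eq : ∑ ω ∈ G, ∏ j, ∏ i, (if ω j i then p else 1 - p) = ∑ ω ∈ G, W ω :=
    Finset.sum_congr rfl fun ω _ => rfl
  rw [hsum_eq]
  linarith [hgood, hcard]
end

section
/- Fix p ∈ (0,1), ε_1, ε_2 ≥ 0, diagonal matrices D_i = diag(D_{i1},…,D_{in}) ∈ ℝ^{n×n} (i = 1,…,B), x = (x_1,…,x_B) ∈ ℝ^{nB}, a finite set C ⊆ ℝ^{nB}, and x̃ ∈ C. Suppose (i) (1/n)‖Σ_{i=1}^B D_i (x_i − x̃_i)‖₂² ≤ (p²/n)‖Σ_{i=1}^B (x_i − x̃_i)‖₂² + ((p−p²)/n)‖x − x̃‖₂² + Bρ²ε_1, and (ii) for every c ∈ C, (1/n)‖Σ_{i=1}^B D_i (x_i − c_i)‖₂² ≥ (p²/n)‖Σ_{i=1}^B (x_i − c_i)‖₂² + ((p−p²)/n)‖x − c‖₂² − Bρ²ε_2. Then any minimizer x̂ of ‖Σ_{i=1}^B D_i(x_i − c_i)‖₂² over c ∈ C satisfies ((p−p²)/n)‖x − x̂‖₂² ≤ ((p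 + (B−1)p²)/n)‖x − x̃‖₂² + Bρ²(ε_1 + ε_2). -/
open Finset

/-- Deterministic error bound for the CSP minimizer, given the two
concentration events. Frames are indexed by `i : Fin B`, coordinates by `j : Fin n`;
`‖Σ_i v_i‖₂² = Σ_j (Σ_i v_{ij})²` and `‖x − c‖₂² = Σ_i Σ_j (x_{ij} − c_{ij})²`. -/
theorem csp_deterministic_bound
    (n B : ℕ) (ρ p ε₁ ε₂ : ℝ)
    (hρ : 0 < ρ) (hp : p ∈ Set.Ioo (0 : ℝ) 1) (hε₁ : 0 ≤ ε₁) (hε₂ : 0 ≤ ε₂)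
    (D : Fin B → Fin n → ℝ)
    (x : Fin B → Fin n → ℝ)
    (C : Finset (Fin B → Fin n → ℝ))
    (xt : Fin B → Fin n → ℝ) (hxt : xt ∈ C)
    (h1 : (1 / (n : ℝ)) * ∑ j, (∑ i, D i j * (x i j - xt i j)) ^ 2 ≤
      (p ^ 2 / n) * ∑ j, (∑ i, (x i j - xt i j)) ^ 2
        + ((p - p ^ 2) / n) * ∑ i, ∑ j, (x i j - xt i j) ^ 2
        + B * ρ ^ 2 * ε₁)
    (h2 : ∀ c ∈ C, (1 / (n : ℝ)) * ∑ j, (∑ i, D i j * (x i j - c i j)) ^ 2 ≥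
      (p ^ 2 / n) * ∑ j, (∑ i, (x i j - c i j)) ^ 2
        + ((p - p ^ 2) / n) * ∑ i, ∑ j, (x i j - c i j) ^ 2
        - B * ρ ^ 2 * ε₂)
    (xhat : Fin B → Fin n → ℝ) (hhatmem : xhat ∈ C)
    (hhatmin : ∀ c ∈ C,
      ∑ j, (∑ i, D i j * (x i j - xhat i j)) ^ 2 ≤
        ∑ j, (∑ i, D i j * (x i j - c i j)) ^ 2) :
    ((p - p ^ 2) / n) * ∑ i, ∑ j, (x i j - xhat i j) ^ 2 ≤
      ((p + ((B : ℝ) - 1) * p ^ 2) / n) * ∑ i, ∑ j, (x i j - xt i j) ^ 2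
        + B * ρ ^ 2 * (ε₁ + ε₂) := by
  obtain ⟨hp0, hp1⟩ := hp
  have hA := h2 xhat hhatmem
  have hB := hhatmin xt hxt
  have hn : (0:ℝ) ≤ 1 / n := by positivity
  have hpn : (0:ℝ) ≤ p ^ 2 / n := by positivity
  have hCS : ∑ j, (∑ i, (x i j - xt i j)) ^ 2 ≤
      (B : ℝ) * ∑ i, ∑ j, (x i j - xt i j) ^ 2 := by
    rw [Finset.sum_comm, Finset.mul_sum]
    apply Finset.sum_le_sum
    intro j _
    simpa using sq_sum_le_card_mul_sum_sq (s := Finset.univ)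
      (f := fun i => x i j - xt i j)
  have hSq : (0:ℝ) ≤ ∑ j, (∑ i, (x i j - xhat i j)) ^ 2 := by positivity
  have hB' : (1 / (n:ℝ)) * ∑ j, (∑ i, D i j * (x i j - xhat i j)) ^ 2 ≤
      (1 / (n:ℝ)) * ∑ j, (∑ i, D i j * (x i j - xt i j)) ^ 2 :=
    mul_le_mul_of_nonneg_left hB hn
  have hCS' : (p ^ 2 / n) * ∑ j, (∑ i, (x i j - xt i j)) ^ 2 ≤
      (p ^ 2 / n) * ((B : ℝ) * ∑ i, ∑ j, (x i j - xt i j) ^ 2) :=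
    mul_le_mul_of_nonneg_left hCS hpn
  have hSq' : (0:ℝ) ≤ (p ^ 2 / n) * ∑ j, (∑ i, (x i j - xhat i j)) ^ 2 :=
    mul_nonneg hpn hSq
  have hring : ((p + ((B : ℝ) - 1) * p ^ 2) / n) * ∑ i, ∑ j, (x i j - xt i j) ^ 2 =
      ((p - p ^ 2) / n) * ∑ i, ∑ j, (x i j - xt i j) ^ 2
        + (p ^ 2 / n) * ((B : ℝ) * ∑ i, ∑ j, (x i j - xt i j) ^ 2) := by ring
  linarith
end
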